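/- Let n ≥ 2, α nonnegative edge weights with ∑_{i=1}^{n-1} α_{in} > 0, and α' the modified weights with α'_{ij} = α_{ij} + α_{in}α_{jn}/∑_k α_{kn} for i,j ≤ n-1 and α'_{in} = 0. Then for every 1 ≤ k ≤ n, μ_k(α) − μ_k(α') ≤ 2 ∑_{1≤i≤j≤n-1} α_{in}α_{jn} / ∑_{i=1}^{n-1} α_{in}, where μ_k denotes the k-th smallest eigenvalue of the corresponding weighted graph Laplacian. -/

import Mathlib

open Matrix BigOperators

noncomputable def wvec {n : ℕ} (i j : Fin n) : Fin n → ℝ :=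
  Pi.single i 1 - Pi.single j 1

noncomputable def Lap {n : ℕ} (α : Fin n → Fin n → ℝ) : Matrix (Fin n) (Fin n) ℝ :=
  ∑ i, ∑ j, if i < j then α i j • Matrix.vecMulVec (wvec i j) (wvec i j) else 0

/-- The eigenvalues of a Hermitian matrix, listed in nondecreasing order. -/
noncomputable def sortedEigs {n : ℕ} (A : Matrix (Fin n) (Fin n) ℝ)
    (hA : A.IsHermitian) : Fin n → ℝ :=
  hA.eigenvalues ∘ Tuple.sort hA.eigenvalues

lemma quadform_eq {m : ℕ} (A : Matrix (Fin m) (Fin m) ℝ) (hA : A.IsHermitian)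
    (x : EuclideanSpace ℝ (Fin m)) :
    x ⬝ᵥ A *ᵥ x = ∑ i, hA.eigenvalues i * (hA.eigenvectorBasis.repr x i)^2 := by
  set b := hA.eigenvectorBasis with hb
  set T := Matrix.toEuclideanLin A with hT
  have hTb : ∀ i, T (b i) = hA.eigenvalues i • b i := by
    intro i
    apply (WithLp.equiv 2 (Fin m → ℝ)).injective
    simp only [WithLp.equiv_apply, hT, Matrix.piLp_ofLp_toEuclideanLin]
    have := hA.mulVec_eigenvectorBasis i
    simpa [Matrix.toLin'_apply] using this
  have h0 : x ⬝ᵥ A *ᵥ x = (inner ℝ x (T x) : ℝ) := by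
    simp [PiLp.inner_apply, RCLike.inner_apply, conj_trivial, dotProduct, hT,
      Matrix.toEuclideanLin_apply]
    exact Finset.sum_congr rfl fun _ _ => mul_comm _ _
  rw [h0]
  have hsum : ∑ i, b.repr x i • b i = x := b.sum_repr x
  conv_lhs => rw [← hsum, map_sum]
  rw [inner_sum]
  apply Finset.sum_congr rfl
  intro i _
  rw [hsum, _root_.map_smul, hTb i, smul_smul, inner_smul_right]
  have : (inner ℝ x (b i) : ℝ) = b.repr x i := by
    rw [real_inner_comm]
    exact (b.repr_apply_apply x i).symm
  rw [this]; ring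

lemma dot_self_eq {m : ℕ} (b : OrthonormalBasis (Fin m) ℝ (EuclideanSpace ℝ (Fin m)))
    (x : EuclideanSpace ℝ (Fin m)) :
    x ⬝ᵥ x = ∑ i, (b.repr x i)^2 := by
  have h0 : x ⬝ᵥ x = (inner ℝ x x : ℝ) := by
    simp only [PiLp.inner_apply, RCLike.inner_apply, conj_trivial, dotProduct]
  rw [h0, show (inner ℝ x x : ℝ) = inner ℝ (b.repr x) (b.repr x) from (b.repr.inner_map_map x x).symm]
  simp only [PiLp.inner_apply, RCLike.inner_apply, conj_trivial]
  exact Finset.sum_congr rfl fun i _ => (sq (b.repr x i)).symm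

lemma span_card {m : ℕ} (b : OrthonormalBasis (Fin m) ℝ (EuclideanSpace ℝ (Fin m)))
    (s : Finset (Fin m)) :
    Module.finrank ℝ (Submodule.span ℝ (⇑b '' (↑s : Set (Fin m)))) = s.card := by
  have li : LinearIndependent ℝ (fun i : (↑s : Set (Fin m)) => b i) :=
    b.orthonormal.linearIndependent.comp _ Subtype.val_injective
  have hr : Set.range (fun i : (↑s : Set (Fin m)) => b i) = ⇑b '' (↑s : Set (Fin m)) := by
    rw [← Set.image_eq_range]
  rw [← hr, finrank_span_eq_card li]
  simp

lemma repr_zero_of_mem_span {m : ℕ} (b : OrthonormalBasis (Fin m) ℝ (EuclideanSpace ℝ (Fin m)))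
    (s : Finset (Fin m)) (x : EuclideanSpace ℝ (Fin m))
    (hx : x ∈ Submodule.span ℝ (⇑b '' (↑s : Set (Fin m)))) (i : Fin m) (hi : i ∉ s) :
    b.repr x i = 0 := by
  rw [← b.coe_toBasis] at hx
  rw [Module.Basis.mem_span_image] at hx
  rw [← b.coe_toBasis_repr_apply]
  by_contra h
  exact hi (hx (Finsupp.mem_support_iff.mpr h))

lemma weyl_bound {m : ℕ} (A B : Matrix (Fin m) (Fin m) ℝ) (hA : A.IsHermitian)
    (hB : B.IsHermitian) (c : ℝ)
    (h : ∀ x : Fin m → ℝ, x ⬝ᵥ A *ᵥ x ≤ x ⬝ᵥ B *ᵥ x + c * (x ⬝ᵥ x)) (k : Fin m) :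
    sortedEigs A hA k ≤ sortedEigs B hB k + c := by
  classical
  set bA := hA.eigenvectorBasis with hbA
  set bB := hB.eigenvectorBasis with hbB
  set σ := Tuple.sort hA.eigenvalues with hσ
  set τ := Tuple.sort hB.eigenvalues with hτ
  set sA : Finset (Fin m) := (Finset.Ici k).image σ with hsA
  set sB : Finset (Fin m) := (Finset.Iic k).image τ with hsB
  set SA := Submodule.span ℝ (⇑bA '' (↑sA : Set (Fin m))) with hSA
  set SB := Submodule.span ℝ (⇑bB '' (↑sB : Set (Fin m))) with hSB
  have hcardA : sA.card = m - k := by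
    rw [hsA, Finset.card_image_of_injective _ σ.injective, Fin.card_Ici]
  have hcardB : sB.card = k + 1 := by
    rw [hsB, Finset.card_image_of_injective _ τ.injective, Fin.card_Iic]
  have hrankA : Module.finrank ℝ SA = m - k := by rw [hSA, span_card, hcardA]
  have hrankB : Module.finrank ℝ SB = k + 1 := by rw [hSB, span_card, hcardB]
  have hsup : Module.finrank ℝ (SA ⊔ SB : Submodule ℝ (EuclideanSpace ℝ (Fin m))) ≤ m := by
    have := Submodule.finrank_le (SA ⊔ SB)
    rwa [finrank_euclideanSpace_fin] at this
  have hinf : 0 < Module.finrank ℝ (SA ⊓ SB : Submodule ℝ (EuclideanSpace ℝ (Fin m))) := by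
    have heq := Submodule.finrank_sup_add_finrank_inf_eq SA SB
    rw [hrankA, hrankB] at heq
    have hk : (k : ℕ) < m := k.isLt
    omega
  obtain ⟨⟨x, hxmem⟩, hxne⟩ := (Module.finrank_pos_iff_exists_ne_zero (R := ℝ)).mp hinf
  have hx0 : x ≠ 0 := fun h0 => hxne (by simp [h0])
  have hxA : x ∈ SA := hxmem.1
  have hxB : x ∈ SB := hxmem.2
  have hge : (0:ℝ) ≤ x ⬝ᵥ x := by
    have : x ⬝ᵥ x = ∑ i, x i * x i := rfl
    rw [this]
    exact Finset.sum_nonneg fun i _ => mul_self_nonneg _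
  have hN : 0 < x ⬝ᵥ x :=
    lt_of_le_of_ne hge fun h1 => hx0 (by simpa using dotProduct_self_eq_zero.mp h1.symm)
  -- lower bound for A
  have hAx : sortedEigs A hA k * (x ⬝ᵥ x) ≤ x ⬝ᵥ A *ᵥ x := by
    rw [quadform_eq A hA x, dot_self_eq bA x, Finset.mul_sum]
    apply Finset.sum_le_sum
    intro i _
    by_cases hi : i ∈ sA
    · obtain ⟨j, hj, rfl⟩ := Finset.mem_image.mp hi
      have := Tuple.monotone_sort hA.eigenvalues (Finset.mem_Ici.mp hj)
      exact mul_le_mul_of_nonneg_right this (sq_nonneg _)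
    · rw [repr_zero_of_mem_span bA sA x hxA i hi]
      simp
  -- upper bound for B
  have hBx : x ⬝ᵥ B *ᵥ x ≤ sortedEigs B hB k * (x ⬝ᵥ x) := by
    rw [quadform_eq B hB x, dot_self_eq bB x, Finset.mul_sum]
    apply Finset.sum_le_sum
    intro i _
    by_cases hi : i ∈ sB
    · obtain ⟨j, hj, rfl⟩ := Finset.mem_image.mp hi
      have := Tuple.monotone_sort hB.eigenvalues (Finset.mem_Iic.mp hj)
      exact mul_le_mul_of_nonneg_right this (sq_nonneg _)
    · rw [repr_zero_of_mem_span bB sB x hxB i hi]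
      simp
  have hcomb := h x
  nlinarith [hAx, hBx, hcomb, hN]

lemma vecMulVec_mulVec' {p : ℕ} (w v x : Fin p → ℝ) :
    Matrix.vecMulVec w v *ᵥ x = (v ⬝ᵥ x) • w := by
  funext q
  simp [Matrix.mulVec, Matrix.vecMulVec_apply, dotProduct, Finset.mul_sum, mul_assoc,
    mul_comm, mul_left_comm]

lemma wvec_dot {p : ℕ} (i j : Fin p) (x : Fin p → ℝ) : wvec i j ⬝ᵥ x = x i - x j := by
  simp [wvec, sub_dotProduct, single_dotProduct]

lemma dot_wvec {p : ℕ} (i j : Fin p) (x : Fin p → ℝ) : x ⬝ᵥ wvec i j = x i - x j := by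
  simp [wvec, dotProduct_sub, dotProduct_single]

lemma lap_quadform {p : ℕ} (β : Fin p → Fin p → ℝ) (x : Fin p → ℝ) :
    x ⬝ᵥ Lap β *ᵥ x = ∑ i, ∑ j, if i < j then β i j * (x i - x j)^2 else 0 := by
  classical
  let f : Matrix (Fin p) (Fin p) ℝ →+ ℝ :=
    { toFun := fun M => x ⬝ᵥ M *ᵥ x
      map_zero' := by simp
      map_add' := fun M N => by rw [Matrix.add_mulVec, dotProduct_add] }
  have h0 : x ⬝ᵥ Lap β *ᵥ x = f (∑ i, ∑ j,
      if i < j then β i j • Matrix.vecMulVec (wvec i j) (wvec i j) else 0) := rfl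
  rw [h0, map_sum]
  apply Finset.sum_congr rfl
  intro i _
  rw [map_sum]
  apply Finset.sum_congr rfl
  intro j _
  by_cases hij : i < j
  · simp only [hij, if_true]
    show x ⬝ᵥ (β i j • Matrix.vecMulVec (wvec i j) (wvec i j)) *ᵥ x = _
    rw [Matrix.smul_mulVec, dotProduct_smul, vecMulVec_mulVec',
      dotProduct_smul, wvec_dot, dot_wvec]
    rw [smul_eq_mul, smul_eq_mul, sq]
  · simp only [hij, if_false]
    show x ⬝ᵥ (0 : Matrix (Fin p) (Fin p) ℝ) *ᵥ x = 0
    rw [Matrix.zero_mulVec, dotProduct_zero]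

lemma two_sum_lt {p : ℕ} (g : Fin p → Fin p → ℝ) (hsym : ∀ i j, g i j = g j i)
    (hdiag : ∀ i, g i i = 0) :
    2 * (∑ i, ∑ j, if i < j then g i j else 0) = ∑ i, ∑ j, g i j := by
  have hswap : (∑ i, ∑ j, if i < j then g i j else 0)
      = ∑ i, ∑ j, if j < i then g i j else 0 := by
    rw [Finset.sum_comm]
    exact Finset.sum_congr rfl fun i _ => Finset.sum_congr rfl fun j _ => by
      rw [hsym]
  rw [two_mul]
  nth_rewrite 2 [hswap]
  rw [← Finset.sum_add_distrib]
  apply Finset.sum_congr rfl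
  intro i _
  rw [← Finset.sum_add_distrib]
  apply Finset.sum_congr rfl
  intro j _
  rcases lt_trichotomy i j with h | h | h
  · simp [h, not_lt.mpr h.le]
  · simp [h, hdiag]
  · simp [h, not_lt.mpr h.le]

lemma two_sum_le {p : ℕ} (g : Fin p → Fin p → ℝ) (hsym : ∀ i j, g i j = g j i) :
    2 * (∑ i, ∑ j, if i ≤ j then g i j else 0) = (∑ i, ∑ j, g i j) + ∑ i, g i i := by
  have hswap : (∑ i, ∑ j, if i ≤ j then g i j else 0)
      = ∑ i, ∑ j, if j ≤ i then g i j else 0 := by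
    rw [Finset.sum_comm]
    exact Finset.sum_congr rfl fun i _ => Finset.sum_congr rfl fun j _ => by
      rw [hsym]
  have hdiag : (∑ i, ∑ j, if i = j then g i j else 0) = ∑ i, g i i := by
    apply Finset.sum_congr rfl
    intro i _
    rw [Finset.sum_ite_eq (Finset.univ) i (fun j => g i j)]
    simp
  rw [two_mul]
  nth_rewrite 2 [hswap]
  rw [← hdiag, ← Finset.sum_add_distrib]
  rw [show (∑ i, ∑ j, g i j) + ∑ i, ∑ j, (if i = j then g i j else 0)
      = ∑ i, (∑ j, g i j + ∑ j, (if i = j then g i j else 0)) from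
    (Finset.sum_add_distrib).symm]
  apply Finset.sum_congr rfl
  intro i _
  rw [← Finset.sum_add_distrib, ← Finset.sum_add_distrib]
  apply Finset.sum_congr rfl
  intro j _
  rcases lt_trichotomy i j with h | h | h
  · simp [h.le, not_le.mpr h, h.ne]
  · simp [h]
  · simp [h.le, not_le.mpr h, h.ne', (h.ne).symm]

lemma split_sum {n : ℕ} (β : Fin (n+1) → Fin (n+1) → ℝ) (x : Fin (n+1) → ℝ) :
    (∑ i, ∑ j, if i < j then β i j * (x i - x j)^2 else 0)
      = (∑ i : Fin n, ∑ j : Fin n, if i < j then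
          β i.castSucc j.castSucc * (x i.castSucc - x j.castSucc)^2 else 0)
        + ∑ i : Fin n, β i.castSucc (Fin.last n) * (x i.castSucc - x (Fin.last n))^2 := by
  rw [Fin.sum_univ_castSucc (n := n)]
  have hlast : (∑ j, if Fin.last n < j then β (Fin.last n) j * (x (Fin.last n) - x j)^2 else 0)
      = 0 := by
    apply Finset.sum_eq_zero
    intro j _
    rw [if_neg (not_lt.mpr (Fin.le_last j))]
  rw [hlast, add_zero]
  rw [← Finset.sum_add_distrib]
  apply Finset.sum_congr rfl
  intro i _
  rw [Fin.sum_univ_castSucc (n := n)]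
  have h1 : (∑ j : Fin n, if i.castSucc < j.castSucc then
      β i.castSucc j.castSucc * (x i.castSucc - x j.castSucc)^2 else 0)
      = ∑ j : Fin n, if i < j then
      β i.castSucc j.castSucc * (x i.castSucc - x j.castSucc)^2 else 0 := by
    apply Finset.sum_congr rfl
    intro j _
    by_cases h : i < j
    · rw [if_pos h, if_pos (Fin.castSucc_lt_castSucc_iff.mpr h)]
    · rw [if_neg h, if_neg (fun hc => h (Fin.castSucc_lt_castSucc_iff.mp hc))]
  have h2 : (if i.castSucc < Fin.last n then
      β i.castSucc (Fin.last n) * (x i.castSucc - x (Fin.last n))^2 else 0)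
      = β i.castSucc (Fin.last n) * (x i.castSucc - x (Fin.last n))^2 :=
    if_pos (Fin.castSucc_lt_last i)
  rw [h1, h2]

lemma key_identity {n : ℕ} (a y : Fin n → ℝ) :
    (∑ i, a i) * (∑ i, a i * y i ^ 2)
      - (∑ i, ∑ j, if i < j then a i * a j * (y i - y j)^2 else 0)
      = (∑ i, a i * y i)^2 := by
  set P := ∑ i, a i * y i ^ 2 with hP
  set T := ∑ i, ∑ j, (if i < j then a i * a j * (y i - y j)^2 else 0) with hT
  set R := ∑ i, a i * y i with hR
  have h2T : 2 * T = ∑ i, ∑ j, a i * a j * (y i - y j)^2 :=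
    two_sum_lt _ (fun i j => by ring) (fun i => by simp)
  have e1 : (∑ i, a i) * P = ∑ i, ∑ j, a i * (a j * y j ^ 2) :=
    Finset.sum_mul_sum _ _ _ _
  have e2 : (∑ i, a i) * P = ∑ i, ∑ j, a j * (a i * y i ^ 2) := by
    rw [e1, Finset.sum_comm]
  have e3 : R^2 = ∑ i, ∑ j, (a i * y i) * (a j * y j) := by
    rw [sq, hR, Finset.sum_mul_sum]
  have main : 2 * ((∑ i, a i) * P - T) = 2 * R^2 := by
    calc 2 * ((∑ i, a i) * P - T)
        = ((∑ i, a i) * P + (∑ i, a i) * P) - 2 * T := by ring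
      _ = ((∑ i, ∑ j, a i * (a j * y j ^ 2)) + ∑ i, ∑ j, a j * (a i * y i ^ 2))
          - ∑ i, ∑ j, a i * a j * (y i - y j)^2 := by
        rw [h2T]
        nth_rewrite 1 [e1]
        nth_rewrite 1 [e2]
        rfl
      _ = ∑ i, ∑ j, ((a i * (a j * y j ^ 2) + a j * (a i * y i ^ 2))
          - a i * a j * (y i - y j)^2) := by
        rw [← Finset.sum_add_distrib, ← Finset.sum_sub_distrib]
        apply Finset.sum_congr rfl
        intro i _
        rw [← Finset.sum_add_distrib, ← Finset.sum_sub_distrib]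
      _ = ∑ i, ∑ j, 2 * ((a i * y i) * (a j * y j)) := by
        apply Finset.sum_congr rfl
        intro i _
        apply Finset.sum_congr rfl
        intro j _
        ring
      _ = 2 * R^2 := by
        rw [e3, Finset.mul_sum]
        apply Finset.sum_congr rfl
        intro i _
        rw [Finset.mul_sum]
  linarith
theorem stmt2 (n : ℕ) (hn : 1 ≤ n) (α : Fin (n+1) → Fin (n+1) → ℝ)
    (hα : ∀ i j : Fin (n+1), i < j → 0 ≤ α i j)
    (hs : 0 < ∑ i : Fin n, α i.castSucc (Fin.last n))
    (α' : Fin (n+1) → Fin (n+1) → ℝ)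
    (hα' : ∀ i j : Fin n, i < j → α' i.castSucc j.castSucc
      = α i.castSucc j.castSucc +
        α i.castSucc (Fin.last n) * α j.castSucc (Fin.last n) /
          ∑ k : Fin n, α k.castSucc (Fin.last n))
    (hα'0 : ∀ i : Fin n, α' i.castSucc (Fin.last n) = 0)
    (hA : (Lap α).IsHermitian) (hB : (Lap α').IsHermitian) :
    ∀ k : Fin (n+1),
      sortedEigs (Lap α) hA k - sortedEigs (Lap α') hB k ≤
        2 * (∑ i : Fin n, ∑ j : Fin n, if i ≤ j then
              α i.castSucc (Fin.last n) * α j.castSucc (Fin.last n) else 0) /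
          ∑ i : Fin n, α i.castSucc (Fin.last n) := by
  intro k
  set S : ℝ := ∑ i : Fin n, α i.castSucc (Fin.last n) with hS
  set W : ℝ := (∑ i : Fin n, ∑ j : Fin n,
      α i.castSucc (Fin.last n) * α j.castSucc (Fin.last n))
    + ∑ i : Fin n, α i.castSucc (Fin.last n) * α i.castSucc (Fin.last n) with hWdef
  have hW : 2 * (∑ i : Fin n, ∑ j : Fin n, if i ≤ j then
      α i.castSucc (Fin.last n) * α j.castSucc (Fin.last n) else 0) = W :=
    two_sum_le _ (fun i j => by ring)
  have hprod : (∑ i : Fin n, ∑ j : Fin n,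
      α i.castSucc (Fin.last n) * α j.castSucc (Fin.last n)) = S * S := by
    rw [hS, Finset.sum_mul_sum]
  -- the quadratic form inequality
  have hq : ∀ x : Fin (n+1) → ℝ,
      x ⬝ᵥ Lap α *ᵥ x ≤ x ⬝ᵥ Lap α' *ᵥ x + (W / S) * (x ⬝ᵥ x) := by
    intro x
    have hQA : x ⬝ᵥ Lap α *ᵥ x
        = (∑ i : Fin n, ∑ j : Fin n, if i < j then
            α i.castSucc j.castSucc * (x i.castSucc - x j.castSucc)^2 else 0)
          + ∑ i : Fin n, α i.castSucc (Fin.last n)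
              * (x i.castSucc - x (Fin.last n))^2 := by
      rw [lap_quadform, split_sum]
    have hQB : x ⬝ᵥ Lap α' *ᵥ x
        = (∑ i : Fin n, ∑ j : Fin n, if i < j then
            α i.castSucc j.castSucc * (x i.castSucc - x j.castSucc)^2 else 0)
          + ∑ i : Fin n, ∑ j : Fin n, (if i < j then
              α i.castSucc (Fin.last n) * α j.castSucc (Fin.last n) / S
                * (x i.castSucc - x j.castSucc)^2 else 0) := by
      rw [lap_quadform, split_sum]
      have hz : (∑ i : Fin n, α' i.castSucc (Fin.last n)
          * (x i.castSucc - x (Fin.last n))^2) = 0 :=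
        Finset.sum_eq_zero fun i _ => by rw [hα'0 i, zero_mul]
      rw [hz, add_zero, ← Finset.sum_add_distrib]
      apply Finset.sum_congr rfl
      intro i _
      rw [← Finset.sum_add_distrib]
      apply Finset.sum_congr rfl
      intro j _
      by_cases hij : i < j
      · rw [if_pos hij, if_pos hij, if_pos hij, hα' i j hij]
        ring
      · rw [if_neg hij, if_neg hij, if_neg hij, add_zero]
    -- key identity specialized
    have KI : S * (∑ i : Fin n, α i.castSucc (Fin.last n)
          * (x i.castSucc - x (Fin.last n))^2)
        - (∑ i : Fin n, ∑ j : Fin n, if i < j then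
            α i.castSucc (Fin.last n) * α j.castSucc (Fin.last n)
              * (x i.castSucc - x (Fin.last n) - (x j.castSucc - x (Fin.last n)))^2 else 0)
        = (∑ i : Fin n, α i.castSucc (Fin.last n)
            * (x i.castSucc - x (Fin.last n)))^2 := by
      have := key_identity (fun i => α i.castSucc (Fin.last n))
        (fun i => x i.castSucc - x (Fin.last n))
      simpa using this
    have step1 : S * (∑ i : Fin n, ∑ j : Fin n, (if i < j then
          α i.castSucc (Fin.last n) * α j.castSucc (Fin.last n) / S
            * (x i.castSucc - x j.castSucc)^2 else 0))
        = ∑ i : Fin n, ∑ j : Fin n, (if i < j then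
            α i.castSucc (Fin.last n) * α j.castSucc (Fin.last n)
              * (x i.castSucc - x (Fin.last n) - (x j.castSucc - x (Fin.last n)))^2 else 0) := by
      rw [Finset.mul_sum]
      apply Finset.sum_congr rfl
      intro i _
      rw [Finset.mul_sum]
      apply Finset.sum_congr rfl
      intro j _
      by_cases hij : i < j
      · rw [if_pos hij, if_pos hij]
        field_simp
        ring
      · rw [if_neg hij, if_neg hij, mul_zero]
    have hsD : S * (x ⬝ᵥ Lap α *ᵥ x - x ⬝ᵥ Lap α' *ᵥ x)
        = (∑ i : Fin n, α i.castSucc (Fin.last n)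
            * (x i.castSucc - x (Fin.last n)))^2 := by
      rw [hQA, hQB]
      rw [show ((∑ i : Fin n, ∑ j : Fin n, if i < j then
            α i.castSucc j.castSucc * (x i.castSucc - x j.castSucc)^2 else 0)
          + ∑ i : Fin n, α i.castSucc (Fin.last n)
              * (x i.castSucc - x (Fin.last n))^2)
          - ((∑ i : Fin n, ∑ j : Fin n, if i < j then
            α i.castSucc j.castSucc * (x i.castSucc - x j.castSucc)^2 else 0)
          + ∑ i : Fin n, ∑ j : Fin n, (if i < j then
              α i.castSucc (Fin.last n) * α j.castSucc (Fin.last n) / S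
                * (x i.castSucc - x j.castSucc)^2 else 0))
          = (∑ i : Fin n, α i.castSucc (Fin.last n)
              * (x i.castSucc - x (Fin.last n))^2)
            - ∑ i : Fin n, ∑ j : Fin n, (if i < j then
              α i.castSucc (Fin.last n) * α j.castSucc (Fin.last n) / S
                * (x i.castSucc - x j.castSucc)^2 else 0) from by ring]
      rw [mul_sub, step1]
      exact KI
    -- Cauchy-Schwarz
    have hCS : (∑ i : Fin n, α i.castSucc (Fin.last n)
          * (x i.castSucc - x (Fin.last n)))^2 ≤ W * (x ⬝ᵥ x) := by
      set f : Fin (n+1) → ℝ :=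
        Fin.snoc (fun i => α i.castSucc (Fin.last n)) (-S) with hf
      have hfx : (∑ p, f p * x p) = ∑ i : Fin n, α i.castSucc (Fin.last n)
          * (x i.castSucc - x (Fin.last n)) := by
        rw [Fin.sum_univ_castSucc]
        simp only [hf, Fin.snoc_castSucc, Fin.snoc_last]
        have : ∑ i : Fin n, α i.castSucc (Fin.last n)
            * (x i.castSucc - x (Fin.last n))
            = (∑ i : Fin n, α i.castSucc (Fin.last n) * x i.castSucc)
              - S * x (Fin.last n) := by
          rw [hS, Finset.sum_mul, ← Finset.sum_sub_distrib]
          apply Finset.sum_congr rfl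
          intro i _
          ring
        rw [this]
        ring
      have hf2 : (∑ p, f p ^ 2) = W := by
        rw [Fin.sum_univ_castSucc]
        simp only [hf, Fin.snoc_castSucc, Fin.snoc_last]
        rw [hWdef, hprod]
        have : ∑ i : Fin n, α i.castSucc (Fin.last n) ^ 2
            = ∑ i : Fin n, α i.castSucc (Fin.last n) * α i.castSucc (Fin.last n) :=
          Finset.sum_congr rfl fun i _ => sq _
        rw [this]
        ring
      have hxx : x ⬝ᵥ x = ∑ p, x p ^ 2 := by
        simp [dotProduct, sq]
      have := Finset.sum_mul_sq_le_sq_mul_sq Finset.univ f x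
      rw [hfx, hf2, ← hxx] at this
      exact this
    have h9 : (x ⬝ᵥ Lap α *ᵥ x - x ⬝ᵥ Lap α' *ᵥ x) ≤ W / S * (x ⬝ᵥ x) := by
      rw [div_mul_eq_mul_div, le_div_iff₀ hs]
      calc (x ⬝ᵥ Lap α *ᵥ x - x ⬝ᵥ Lap α' *ᵥ x) * S
          = S * (x ⬝ᵥ Lap α *ᵥ x - x ⬝ᵥ Lap α' *ᵥ x) := by ring
        _ = _ := hsD
        _ ≤ W * (x ⬝ᵥ x) := hCS
    linarith
  have hwb := weyl_bound (Lap α) (Lap α') hA hB (W / S) hq k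
  rw [show 2 * (∑ i : Fin n, ∑ j : Fin n, if i ≤ j then
        α i.castSucc (Fin.last n) * α j.castSucc (Fin.last n) else 0) / S
      = W / S from by rw [hW]]
  linarith
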